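/- In a generalised voting game, if x_min is an O-minimal action and x_max is an O-maximal action for player i, then the criticality-δ increasingly and decreasingly critical sets are disjoint, and the probability of the criticality-δ totally critical set O_TC_i^δ := O_IC_i^δ ∪ O_DC_i^δ satisfies Pr(O_TC_i^δ) = Pr(O | x_max) − Pr(O | x_min). -/
import Mathlib


open MeasureTheory Function

lemma meas_update_aux {ι : Type*} [DecidableEq ι] {X : ι → Type*}
    [∀ j, MeasurableSpace (X j)] (i : ι) (x : X i) :
    Measurable (fun ω : ∀ j, X j => update ω i x) := by
  apply measurable_pi_lambda
  intro j
  by_cases h : j = i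
  · subst h; simp only [update_self]; exact measurable_const
  · simp only [update_of_ne h]; exact measurable_pi_apply j

theorem stmt_5
    {ι : Type*} [Fintype ι] [Nonempty ι] [DecidableEq ι]
    {X : ι → Type*} [∀ j, MeasurableSpace (X j)]
    (μ : ∀ j, Measure (X j)) [∀ j, IsProbabilityMeasure (μ j)]
    {𝒪 : Type*} [MeasurableSpace 𝒪] [MeasurableSingletonClass 𝒪]
    (W : (∀ j, X j) → 𝒪) (hW : Measurable W)
    (O : 𝒪) (i : ι)
    (x_min : X i)
    (hmin : ∀ ω : ∀ j, X j, W (update ω i x_min) = O →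
      ∀ x : X i, W (update ω i x) = O)
    (x_max : X i)
    (hmax : ∀ ω : ∀ j, X j, ∀ x : X i, W (update ω i x) = O →
      W (update ω i x_max) = O)
    :
    Disjoint {ω | W ω ≠ O ∧ W (update ω i x_max) = O} {ω | W ω = O ∧ W (update ω i x_min) ≠ O} ∧
      Measure.pi μ ({ω | W ω ≠ O ∧ W (update ω i x_max) = O} ∪ {ω | W ω = O ∧ W (update ω i x_min) ≠ O}) =
        Measure.pi μ {ω | W (update ω i x_max) = O} - Measure.pi μ {ω | W (update ω i x_min) = O} := by
  constructor
  · rw [Set.disjoint_left]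
    rintro ω ⟨h1, _⟩ ⟨h2, _⟩
    exact h1 h2
  · have hself : ∀ ω : ∀ j, X j, update ω i (ω i) = ω := fun ω => update_eq_self i ω
    have hunion : {ω | W ω ≠ O ∧ W (update ω i x_max) = O} ∪ {ω | W ω = O ∧ W (update ω i x_min) ≠ O}
        = {ω | W (update ω i x_max) = O} \ {ω | W (update ω i x_min) = O} := by
      ext ω
      simp only [Set.mem_union, Set.mem_setOf_eq, Set.mem_diff]
      constructor
      · rintro (⟨h1, h2⟩ | ⟨h1, h2⟩)
        · refine ⟨h2, fun hmn => ?_⟩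
          exact h1 (by rw [← hself ω]; exact hmin ω hmn (ω i))
        · refine ⟨hmax ω (ω i) (by rw [hself ω]; exact h1), h2⟩
      · rintro ⟨h1, h2⟩
        by_cases h : W ω = O
        · exact Or.inr ⟨h, h2⟩
        · exact Or.inl ⟨h, h1⟩
    rw [hunion]
    have hsub : {ω | W (update ω i x_min) = O} ⊆ {ω | W (update ω i x_max) = O} :=
      fun ω h => hmax ω x_min h
    have hmeas : MeasurableSet {ω | W (update ω i x_min) = O} :=
      (hW.comp (meas_update_aux i x_min)) (measurableSet_singleton O)
    exact measure_diff hsub hmeas.nullMeasurableSet (measure_ne_top _ _)
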